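/- For every real x, the series ∑_{n=1}^∞ ((−1)^(n−1) xⁿ / n!) · (dⁿ/dxⁿ arctan)(x) converges and its sum equals arctan(x). -/

import Mathlib

open Complex Metric

lemma myball (x : ℝ) {w : ℂ} (hw : w ∈ Metric.ball (x:ℂ) (Real.sqrt (1+x^2))) :
    (1 - w * I) ≠ 0 ∧ (1 + w * I) / (1 - w * I) ∈ Complex.slitPlane := by
  have hd : dist w (x:ℂ) < Real.sqrt (1+x^2) := mem_ball.mp hw
  have hd2 : (w.re - x)^2 + w.im^2 < 1 + x^2 := by
    have := Complex.dist_eq_re_im w (x:ℂ)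
    rw [this] at hd
    have h1 : (w.re - (x:ℂ).re)^2 + (w.im - (x:ℂ).im)^2 < 1 + x^2 := by
      by_contra hcon
      push_neg at hcon
      exact absurd (Real.sqrt_le_sqrt hcon) (not_le.mpr hd)
    simpa using h1
  have hne : (1 - w * I) ≠ 0 := by
    intro h
    have hre : (1 - w * I).re = 0 := by rw [h]; simp
    have him : (1 - w * I).im = 0 := by rw [h]; simp
    simp [Complex.sub_re, Complex.mul_re, Complex.mul_im, Complex.I_re, Complex.I_im] at hre him
    have e1 : w.im = -1 := by linarith
    rw [him, e1] at hd2
    nlinarith [hd2]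
  refine ⟨hne, ?_⟩
  have hN : 0 < Complex.normSq (1 - w * I) := Complex.normSq_pos.mpr hne
  rw [Complex.mem_slitPlane_iff]
  rcases eq_or_ne w.re 0 with h0 | h0
  · left
    rw [Complex.div_re]
    have : (1 + w * I).re * (1 - w * I).re + (1 + w * I).im * (1 - w * I).im
        = 1 - w.im^2 - w.re^2 := by
      simp [Complex.add_re, Complex.sub_re, Complex.mul_re, Complex.mul_im,
        Complex.add_im, Complex.sub_im, Complex.I_re, Complex.I_im]
      ring
    rw [← add_div, this]
    apply div_pos _ hN
    nlinarith [hd2, mul_eq_zero_of_left h0 x, mul_eq_zero_of_left h0 w.re, h0]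
  · right
    rw [Complex.div_im]
    have : (1 + w * I).im * (1 - w * I).re - (1 + w * I).re * (1 - w * I).im = 2 * w.re := by
      simp [Complex.add_re, Complex.sub_re, Complex.mul_re, Complex.mul_im,
        Complex.add_im, Complex.sub_im, Complex.I_re, Complex.I_im]
      ring
    rw [div_sub_div_same, this]
    positivity

lemma mydiff (x : ℝ) :
    DifferentiableOn ℂ Complex.arctan (Metric.ball (x:ℂ) (Real.sqrt (1+x^2))) := by
  intro w hw
  obtain ⟨hne, hslit⟩ := myball x hw
  apply DifferentiableAt.differentiableWithinAt
  unfold Complex.arctan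
  apply DifferentiableAt.const_mul
  have hd : DifferentiableAt ℂ (fun z : ℂ => (1 + z * I) / (1 - z * I)) w := by
    fun_prop (disch := exact hne)
  exact hd.clog hslit

lemma myan (x : ℝ) (n : ℕ) :
    AnalyticOnNhd ℂ (iteratedDeriv n Complex.arctan)
      (Metric.ball (x:ℂ) (Real.sqrt (1+x^2))) := by
  induction n with
  | zero =>
    simpa [iteratedDeriv_zero] using
      (mydiff x).analyticOnNhd Metric.isOpen_ball
  | succ n ih =>
    rw [iteratedDeriv_succ]
    exact ih.deriv

lemma mymem (x : ℝ) : (x:ℂ) ∈ Metric.ball (x:ℂ) (Real.sqrt (1+x^2)) :=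
  Metric.mem_ball_self (Real.sqrt_pos.mpr (by positivity))

lemma keyRe (n : ℕ) (y : ℝ) :
    iteratedDeriv n Real.arctan y = (iteratedDeriv n Complex.arctan (y:ℂ)).re := by
  induction n generalizing y with
  | zero => simp [← Complex.ofReal_arctan]
  | succ n ih =>
    rw [iteratedDeriv_succ, iteratedDeriv_succ]
    have hfun : iteratedDeriv n Real.arctan
        = fun t : ℝ => (iteratedDeriv n Complex.arctan (t:ℂ)).re := funext fun t => ih t
    rw [hfun]
    have hdiff : DifferentiableAt ℂ (iteratedDeriv n Complex.arctan) (y:ℂ) :=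
      ((myan y n) (y:ℂ) (mymem y)).differentiableAt
    exact (hdiff.hasDerivAt.real_of_complex).deriv

theorem arctan_deriv_series (x : ℝ) :
    HasSum (fun n : ℕ =>
      ((-1) ^ n * x ^ (n + 1) / (Nat.factorial (n + 1) : ℝ)) *
        iteratedDeriv (n + 1) Real.arctan x)
      (Real.arctan x) := by
  have h0 : (0:ℂ) ∈ Metric.ball (x:ℂ) (Real.sqrt (1+x^2)) := by
    rw [Metric.mem_ball, Complex.dist_eq_re_im]
    simp only [Complex.zero_re, Complex.zero_im, Complex.ofReal_re, Complex.ofReal_im]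
    exact Real.sqrt_lt_sqrt (by positivity) (by nlinarith)
  have H := Complex.hasSum_taylorSeries_on_ball (mydiff x) h0
  have ha0 : Complex.arctan 0 = 0 := by
    unfold Complex.arctan
    norm_num
  rw [ha0] at H
  have H1 := (hasSum_nat_add_iff' 1).mpr H
  simp only [Finset.range_one, Finset.sum_singleton, pow_zero, Nat.factorial_zero,
    Nat.cast_one, inv_one, one_smul, iteratedDeriv_zero, zero_sub] at H1
  have H2 := H1.neg
  rw [neg_neg] at H2
  have H3 := Complex.hasSum_re H2
  rw [show (Complex.arctan (x:ℂ)).re = Real.arctan x by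
    rw [← Complex.ofReal_arctan, Complex.ofReal_re]] at H3
  convert H3 using 2 with n
  rw [keyRe (n+1) x]
  have : -((((n+1).factorial : ℂ))⁻¹ • (-(x:ℂ)) ^ (n + 1) •
      iteratedDeriv (n + 1) Complex.arctan (x:ℂ))
      = ((((-1:ℝ)) ^ n * x ^ (n + 1) / ((n+1).factorial : ℝ) : ℝ) : ℂ) *
        iteratedDeriv (n + 1) Complex.arctan (x:ℂ) := by
    simp only [smul_eq_mul]
    push_cast
    ring
  rw [this, Complex.re_ofReal_mul]
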